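/- Let n ≥ 4 and let w : Fin n → Fin n → ℕ be a symmetric weight function with w v v = 0 for all v, such that for every 4-element subset S of Fin n, the sum of w over all unordered pairs of distinct vertices in S is at least 3. Then the total weight, i.e., the sum of w over all unordered pairs of distinct vertices of Fin n, is at least ⌈n(n−2)/3⌉. -/
import Mathlib

open Finset

section AuxLemmas

variable {n : ℕ} (w : Fin n → Fin n → ℕ)

/-- The symmetric double sum is twice the ordered pair sum. -/
lemma two_mul_P (hsymm : ∀ u v : Fin n, w u v = w v u)
    (hdiag : ∀ v : Fin n, w v v = 0) (V : Finset (Fin n)) :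
    ∑ a ∈ V, ∑ b ∈ V, w a b
      = 2 * ∑ a ∈ V, ∑ b ∈ V.filter (fun b => a < b), w a b := by
  have h1 : ∀ a ∈ V, ∑ b ∈ V, w a b
      = (∑ b ∈ V.filter (fun b => a < b), w a b)
        + ∑ b ∈ V.filter (fun b => b < a), w a b := by
    intro a _
    rw [← Finset.sum_filter_add_sum_filter_not V (fun b => a < b) (fun b => w a b)]
    congr 1
    refine (Finset.sum_subset ?_ ?_).symm
    · intro b hb
      simp only [Finset.mem_filter] at hb ⊢
      exact ⟨hb.1, asymm hb.2⟩
    · intro b hb hb2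
      simp only [Finset.mem_filter] at hb hb2
      have hba : ¬ b < a := fun hlt => hb2 ⟨hb.1, hlt⟩
      have hab : a = b := le_antisymm (not_lt.mp hba) (not_lt.mp hb.2)
      rw [← hab]; exact hdiag a
  rw [Finset.sum_congr rfl h1, Finset.sum_add_distrib]
  have h2 : ∑ a ∈ V, ∑ b ∈ V.filter (fun b => b < a), w a b
      = ∑ a ∈ V, ∑ b ∈ V.filter (fun b => a < b), w a b := by
    calc ∑ a ∈ V, ∑ b ∈ V.filter (fun b => b < a), w a b
        = ∑ a ∈ V, ∑ b ∈ V, if b < a then w a b else 0 :=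
          Finset.sum_congr rfl fun a _ => Finset.sum_filter _ _
      _ = ∑ b ∈ V, ∑ a ∈ V, if b < a then w a b else 0 := Finset.sum_comm
      _ = ∑ b ∈ V, ∑ a ∈ V.filter (fun a => b < a), w a b :=
          Finset.sum_congr rfl fun b _ => (Finset.sum_filter _ _).symm
      _ = ∑ b ∈ V, ∑ a ∈ V.filter (fun a => b < a), w b a :=
          Finset.sum_congr rfl fun b _ =>
            Finset.sum_congr rfl fun a _ => hsymm a b
  rw [h2]; ring

/-- The symmetric double sum over an explicit 4-element set. -/
lemma Q4 (hsymm : ∀ u v : Fin n, w u v = w v u)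
    (hdiag : ∀ v : Fin n, w v v = 0) {a b c d : Fin n}
    (hab : a ≠ b) (hac : a ≠ c) (had : a ≠ d)
    (hbc : b ≠ c) (hbd : b ≠ d) (hcd : c ≠ d) :
    ∑ u ∈ ({a, b, c, d} : Finset (Fin n)), ∑ v ∈ ({a, b, c, d} : Finset (Fin n)), w u v
      = 2 * (w a b + w a c + w a d + w b c + w b d + w c d) := by
  have hnota : a ∉ ({b, c, d} : Finset (Fin n)) := by simp [hab, hac, had]
  have hnotb : b ∉ ({c, d} : Finset (Fin n)) := by simp [hbc, hbd]
  have hnotc : c ∉ ({d} : Finset (Fin n)) := by simp [hcd]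
  have inner : ∀ z : Fin n, ∑ v ∈ ({a, b, c, d} : Finset (Fin n)), w z v
      = w z a + w z b + w z c + w z d := by
    intro z
    rw [Finset.sum_insert hnota, Finset.sum_insert hnotb, Finset.sum_insert hnotc,
      Finset.sum_singleton]
    ring
  rw [Finset.sum_congr rfl fun z _ => inner z]
  rw [Finset.sum_insert hnota, Finset.sum_insert hnotb, Finset.sum_insert hnotc,
    Finset.sum_singleton]
  rw [hdiag a, hdiag b, hdiag c, hdiag d, hsymm b a, hsymm c a, hsymm c b,
    hsymm d a, hsymm d b, hsymm d c]
  ring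

/-- Splitting off one vertex from the symmetric double sum. -/
lemma Qsplit (hsymm : ∀ u v : Fin n, w u v = w v u)
    (hdiag : ∀ v : Fin n, w v v = 0) (V : Finset (Fin n)) {v : Fin n} (hv : v ∈ V) :
    ∑ a ∈ V, ∑ b ∈ V, w a b
      = (∑ a ∈ V.erase v, ∑ b ∈ V.erase v, w a b) + 2 * ∑ a ∈ V.erase v, w v a := by
  conv_lhs => rw [← Finset.insert_erase hv]
  rw [Finset.sum_insert (Finset.notMem_erase v V)]
  rw [Finset.sum_insert (Finset.notMem_erase v V), hdiag v, zero_add]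
  rw [Finset.sum_congr rfl fun a (_ : a ∈ V.erase v) =>
    (Finset.sum_insert (Finset.notMem_erase v V) : _ = w a v + _)]
  rw [Finset.sum_add_distrib]
  rw [show (∑ a ∈ V.erase v, w a v) = ∑ a ∈ V.erase v, w v a from
    Finset.sum_congr rfl fun a _ => hsymm a v]
  ring

/-- Arithmetic step for the induction on the ceiling bound. -/
lemma fstep (m : ℕ) (hm : 4 ≤ m) :
    ((m + 1) * (m + 1 - 2) + 2) / 3 = 2 * m / 3 + (m * (m - 2) + 2) / 3 := by
  obtain ⟨j, rfl | rfl | rfl⟩ : ∃ j, m = 3 * j + 4 ∨ m = 3 * j + 5 ∨ m = 3 * j + 6 :=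
    ⟨(m - 4) / 3, by omega⟩
  · have e1 : 3 * j + 4 + 1 - 2 = 3 * j + 3 := by omega
    have e2 : 3 * j + 4 - 2 = 3 * j + 2 := by omega
    rw [e1, e2]
    have e3 : (3 * j + 4 + 1) * (3 * j + 3) = 9 * (j * j) + 24 * j + 15 := by ring
    have e4 : (3 * j + 4) * (3 * j + 2) = 9 * (j * j) + 18 * j + 8 := by ring
    rw [e3, e4]
    generalize j * j = c
    omega
  · have e1 : 3 * j + 5 + 1 - 2 = 3 * j + 4 := by omega
    have e2 : 3 * j + 5 - 2 = 3 * j + 3 := by omega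
    rw [e1, e2]
    have e3 : (3 * j + 5 + 1) * (3 * j + 4) = 9 * (j * j) + 30 * j + 24 := by ring
    have e4 : (3 * j + 5) * (3 * j + 3) = 9 * (j * j) + 24 * j + 15 := by ring
    rw [e3, e4]
    generalize j * j = c
    omega
  · have e1 : 3 * j + 6 + 1 - 2 = 3 * j + 5 := by omega
    have e2 : 3 * j + 6 - 2 = 3 * j + 4 := by omega
    rw [e1, e2]
    have e3 : (3 * j + 6 + 1) * (3 * j + 5) = 9 * (j * j) + 36 * j + 35 := by ring
    have e4 : (3 * j + 6) * (3 * j + 4) = 9 * (j * j) + 30 * j + 24 := by ring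
    rw [e3, e4]
    generalize j * j = c
    omega

/-- Vertex-degree lemma: some vertex has weighted degree at least ⌈(2m-4)/3⌉. -/
lemma exists_big_degree (hsymm : ∀ u v : Fin n, w u v = w v u)
    (hdiag : ∀ v : Fin n, w v v = 0) (m : ℕ) (hm : 5 ≤ m)
    (V : Finset (Fin n)) (hV : V.card = m)
    (hyp : ∀ S ⊆ V, S.card = 4 → 6 ≤ ∑ a ∈ S, ∑ b ∈ S, w a b) :
    ∃ v ∈ V, (2 * m - 2) / 3 ≤ ∑ a ∈ V.erase v, w v a := by
  by_contra hcon
  push_neg at hcon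
  obtain ⟨u, hu⟩ : V.Nonempty := Finset.card_pos.mp (by omega)
  set D := (2 * m - 2) / 3 with hD
  set Z := (V.erase u).filter (fun x => w u x = 0) with hZdef
  have hcV : (V.erase u).card = m - 1 := by
    rw [Finset.card_erase_of_mem hu, hV]
  have hfp := Finset.card_filter_add_card_filter_not
    (s := V.erase u) (p := fun x => w u x = 0)
  rw [← hZdef] at hfp
  have hle1 : ((V.erase u).filter (fun x => ¬ w u x = 0)).card
      ≤ ∑ x ∈ V.erase u, w u x := by
    calc ((V.erase u).filter (fun x => ¬ w u x = 0)).card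
        = ∑ _x ∈ (V.erase u).filter (fun x => ¬ w u x = 0), 1 :=
          Finset.card_eq_sum_ones _
      _ ≤ ∑ x ∈ (V.erase u).filter (fun x => ¬ w u x = 0), w u x :=
          Finset.sum_le_sum fun x hx =>
            Nat.one_le_iff_ne_zero.mpr (Finset.mem_filter.mp hx).2
      _ ≤ ∑ x ∈ V.erase u, w u x :=
          Finset.sum_le_sum_of_subset (Finset.filter_subset _ _)
  have hdu : ∑ x ∈ V.erase u, w u x < D := hcon u hu
  have hZcard : m ≤ Z.card + D := by omega
  by_cases hall2 : ∀ x ∈ Z, ∀ y ∈ Z, x ≠ y → 2 ≤ w x y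
  · -- all pairs inside Z have weight ≥ 2, so any vertex of Z has big degree
    obtain ⟨x, hxZ⟩ : Z.Nonempty := Finset.card_pos.mp (by omega)
    have hxE : x ∈ V.erase u := (Finset.mem_filter.mp hxZ).1
    have hxV : x ∈ V := Finset.mem_of_mem_erase hxE
    have hZx : Z.erase x ⊆ V.erase x := by
      intro b hb
      have hbZ : b ∈ Z := Finset.mem_of_mem_erase hb
      have hbV : b ∈ V := Finset.mem_of_mem_erase ((Finset.mem_filter.mp hbZ).1)
      exact Finset.mem_erase.mpr ⟨Finset.ne_of_mem_erase hb, hbV⟩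
    have hsum2 : (Z.card - 1) * 2 ≤ ∑ b ∈ V.erase x, w x b := by
      calc (Z.card - 1) * 2 = ∑ _b ∈ Z.erase x, 2 := by
            rw [Finset.sum_const, smul_eq_mul, Finset.card_erase_of_mem hxZ]
        _ ≤ ∑ b ∈ Z.erase x, w x b :=
            Finset.sum_le_sum fun b hb =>
              hall2 x hxZ b (Finset.mem_of_mem_erase hb)
                (Ne.symm (Finset.ne_of_mem_erase hb))
        _ ≤ ∑ b ∈ V.erase x, w x b := Finset.sum_le_sum_of_subset hZx
    have hdx := hcon x hxV
    omega
  · -- some pair x,y in Z has weight ≤ 1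
    push_neg at hall2
    obtain ⟨x, hxZ, y, hyZ, hxy, hwxy2⟩ := hall2
    have hxE : x ∈ V.erase u := (Finset.mem_filter.mp hxZ).1
    have hwux : w u x = 0 := (Finset.mem_filter.mp hxZ).2
    have hyE : y ∈ V.erase u := (Finset.mem_filter.mp hyZ).1
    have hwuy : w u y = 0 := (Finset.mem_filter.mp hyZ).2
    have hxV : x ∈ V := Finset.mem_of_mem_erase hxE
    have hyV : y ∈ V := Finset.mem_of_mem_erase hyE
    have hxu : x ≠ u := Finset.ne_of_mem_erase hxE
    have hyu : y ≠ u := Finset.ne_of_mem_erase hyE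
    set T3 := ((V.erase u).erase x).erase y with hT3
    have hyEx : y ∈ (V.erase u).erase x := Finset.mem_erase.mpr ⟨Ne.symm hxy, hyE⟩
    have hT3card : T3.card = m - 3 := by
      rw [hT3, Finset.card_erase_of_mem hyEx, Finset.card_erase_of_mem hxE, hcV]
      omega
    have key : ∀ t ∈ T3, 3 ≤ w u t + (w x t + (w y t + w x y)) := by
      intro t ht
      have htny : t ≠ y := Finset.ne_of_mem_erase ht
      have ht2 : t ∈ (V.erase u).erase x := Finset.mem_of_mem_erase ht
      have htnx : t ≠ x := Finset.ne_of_mem_erase ht2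
      have ht3 : t ∈ V.erase u := Finset.mem_of_mem_erase ht2
      have htnu : t ≠ u := Finset.ne_of_mem_erase ht3
      have htV : t ∈ V := Finset.mem_of_mem_erase ht3
      have hSsub : ({u, x, y, t} : Finset (Fin n)) ⊆ V := by
        simp only [Finset.insert_subset_iff, Finset.singleton_subset_iff]
        exact ⟨hu, hxV, hyV, htV⟩
      have h1 : u ∉ ({x, y, t} : Finset (Fin n)) := by
        simp only [Finset.mem_insert, Finset.mem_singleton]
        push_neg
        exact ⟨Ne.symm hxu, Ne.symm hyu, Ne.symm htnu⟩
      have h2 : x ∉ ({y, t} : Finset (Fin n)) := by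
        simp only [Finset.mem_insert, Finset.mem_singleton]
        push_neg
        exact ⟨hxy, Ne.symm htnx⟩
      have h3 : y ∉ ({t} : Finset (Fin n)) := by
        simp only [Finset.mem_singleton]
        exact Ne.symm htny
      have hScard : ({u, x, y, t} : Finset (Fin n)).card = 4 := by
        rw [Finset.card_insert_of_notMem h1, Finset.card_insert_of_notMem h2,
          Finset.card_insert_of_notMem h3, Finset.card_singleton]
      have h6 := hyp _ hSsub hScard
      rw [Q4 w hsymm hdiag (Ne.symm hxu) (Ne.symm hyu) (Ne.symm htnu) hxy
        (Ne.symm htnx) (Ne.symm htny)] at h6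
      rw [hwux, hwuy] at h6
      omega
    have hsum : T3.card * 3
        ≤ (∑ t ∈ T3, w u t) + ((∑ t ∈ T3, w x t)
            + ((∑ t ∈ T3, w y t) + T3.card * w x y)) := by
      calc T3.card * 3 = ∑ _t ∈ T3, 3 := by rw [Finset.sum_const, smul_eq_mul]
        _ ≤ ∑ t ∈ T3, (w u t + (w x t + (w y t + w x y))) := Finset.sum_le_sum key
        _ = _ := by
            rw [Finset.sum_add_distrib, Finset.sum_add_distrib, Finset.sum_add_distrib,
              Finset.sum_const, smul_eq_mul]
    have hbu : (∑ t ∈ T3, w u t) ≤ ∑ a ∈ V.erase u, w u a :=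
      Finset.sum_le_sum_of_subset (by
        intro t ht
        exact Finset.mem_of_mem_erase (Finset.mem_of_mem_erase ht))
    have hxnT3 : x ∉ T3 := fun hx' =>
      Finset.notMem_erase x _ (Finset.mem_of_mem_erase hx')
    have hynT3 : y ∉ T3 := Finset.notMem_erase y _
    have hT3subx : insert y T3 ⊆ V.erase x := by
      intro t ht
      rcases Finset.mem_insert.mp ht with rfl | ht'
      · exact Finset.mem_erase.mpr ⟨Ne.symm hxy, hyV⟩
      · have h2' : t ∈ (V.erase u).erase x := Finset.mem_of_mem_erase ht'
        exact Finset.mem_erase.mpr ⟨Finset.ne_of_mem_erase h2',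
          Finset.mem_of_mem_erase (Finset.mem_of_mem_erase h2')⟩
    have hbx : (∑ t ∈ T3, w x t) + w x y ≤ ∑ a ∈ V.erase x, w x a := by
      calc (∑ t ∈ T3, w x t) + w x y = ∑ t ∈ insert y T3, w x t := by
            rw [Finset.sum_insert hynT3]; ring
        _ ≤ ∑ a ∈ V.erase x, w x a := Finset.sum_le_sum_of_subset hT3subx
    have hT3suby : insert x T3 ⊆ V.erase y := by
      intro t ht
      rcases Finset.mem_insert.mp ht with rfl | ht'
      · exact Finset.mem_erase.mpr ⟨hxy, hxV⟩
      · exact Finset.mem_erase.mpr ⟨Finset.ne_of_mem_erase ht',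
          Finset.mem_of_mem_erase (Finset.mem_of_mem_erase (Finset.mem_of_mem_erase ht'))⟩
    have hby : (∑ t ∈ T3, w y t) + w x y ≤ ∑ a ∈ V.erase y, w y a := by
      calc (∑ t ∈ T3, w y t) + w x y = ∑ t ∈ insert x T3, w y t := by
            rw [Finset.sum_insert hxnT3, hsymm y x]; ring
        _ ≤ ∑ a ∈ V.erase y, w y a := Finset.sum_le_sum_of_subset hT3suby
    have hdux := hcon u hu
    have hdx := hcon x hxV
    have hdy := hcon y hyV
    have hs01 : w x y = 0 ∨ w x y = 1 := by omega
    rcases hs01 with h0 | h0 <;> rw [h0] at hsum hbx hby <;> omega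

/-- Main induction. -/
lemma aux_bound (hsymm : ∀ u v : Fin n, w u v = w v u)
    (hdiag : ∀ v : Fin n, w v v = 0) :
    ∀ m : ℕ, 4 ≤ m → ∀ V : Finset (Fin n), V.card = m →
      (∀ S ⊆ V, S.card = 4 → 6 ≤ ∑ a ∈ S, ∑ b ∈ S, w a b) →
      2 * ((m * (m - 2) + 2) / 3) ≤ ∑ a ∈ V, ∑ b ∈ V, w a b := by
  intro m hm
  induction m, hm using Nat.le_induction with
  | base =>
      intro V hV hyp
      have h := hyp V (Finset.Subset.refl V) hV
      have h6 : 2 * ((4 * (4 - 2) + 2) / 3) = 6 := by norm_num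
      rw [h6]
      exact h
  | succ m hm ih =>
      intro V hV hyp
      obtain ⟨v, hv, hdeg⟩ :=
        exists_big_degree w hsymm hdiag (m + 1) (by omega) V hV hyp
      have hcard' : (V.erase v).card = m := by
        rw [Finset.card_erase_of_mem hv, hV]
        omega
      have hyp' : ∀ S ⊆ V.erase v, S.card = 4 → 6 ≤ ∑ a ∈ S, ∑ b ∈ S, w a b :=
        fun S hS h4 => hyp S (hS.trans (Finset.erase_subset _ _)) h4
      have ihm := ih (V.erase v) hcard' hyp'
      rw [Qsplit w hsymm hdiag V hv, fstep m hm]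
      have hdeg' : 2 * m / 3 ≤ ∑ a ∈ V.erase v, w v a := by
        have he : 2 * (m + 1) - 2 = 2 * m := by omega
        rw [he] at hdeg
        exact hdeg
      generalize m * (m - 2) = K at ihm ⊢
      omega

end AuxLemmas

open Finset in
theorem total_weight_lower_bound (n : ℕ) (hn : 4 ≤ n)
    (w : Fin n → Fin n → ℕ)
    (hsymm : ∀ u v : Fin n, w u v = w v u)
    (hdiag : ∀ v : Fin n, w v v = 0)
    (h4 : ∀ S : Finset (Fin n), S.card = 4 →
      3 ≤ ∑ u ∈ S, ∑ v ∈ S.filter (fun v => u < v), w u v) :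
    (n * (n - 2) + 2) / 3 ≤ ∑ u : Fin n, ∑ v ∈ univ.filter (fun v => u < v), w u v := by
  have hcard : (univ : Finset (Fin n)).card = n := by simp
  have hyp : ∀ S ⊆ (univ : Finset (Fin n)), S.card = 4 →
      6 ≤ ∑ a ∈ S, ∑ b ∈ S, w a b := by
    intro S _ h4'
    rw [two_mul_P w hsymm hdiag S]
    have h := h4 S h4'
    omega
  have hmain := aux_bound w hsymm hdiag n hn univ hcard hyp
  rw [two_mul_P w hsymm hdiag univ] at hmain
  generalize n * (n - 2) = K at hmain ⊢
  omega
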